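/- Let q = 2^m with m > 2 and let a, b, c ∈ F_q. Then the sum over all nonzero x ∈ F_q of the absolute trace Tr(a/x + bx + cx³) from F_q to F₂ equals 0. -/

import Mathlib

open scoped Classical
open Finset

theorem stmt_12 (m : ℕ) (hm : 2 < m) [Fintype (GaloisField 2 m)]
    (a b c : GaloisField 2 m) :
    ∑ x ∈ Finset.univ.filter (fun x : GaloisField 2 m => x ≠ 0),
      Algebra.trace (ZMod 2) (GaloisField 2 m) (a / x + b * x + c * x^3) = 0 := by
  have hcard : Fintype.card (GaloisField 2 m) = 2 ^ m := by
    rw [Fintype.card_eq_nat_card]; exact GaloisField.card 2 m (by omega)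
  have h8 : 8 ≤ 2 ^ m := by
    calc (8:ℕ) = 2 ^ 3 := rfl
    _ ≤ 2 ^ m := Nat.pow_le_pow_right (by norm_num) hm
  have h7 : ¬ (Fintype.card (GaloisField 2 m) - 1 ∣ 1) := by
    rw [hcard]; intro h
    have := Nat.le_of_dvd Nat.one_pos h
    omega
  have h3 : ¬ (Fintype.card (GaloisField 2 m) - 1 ∣ 3) := by
    rw [hcard]; intro h
    have := Nat.le_of_dvd (by norm_num) h
    omega
  rw [← map_sum]
  have key : ∑ x ∈ Finset.univ.filter (fun x : GaloisField 2 m => x ≠ 0),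
      (a / x + b * x + c * x^3) = 0 := by
    have hset : Finset.univ.filter (fun x : GaloisField 2 m => x ≠ 0)
        = Finset.univ.map ⟨(fun x : (GaloisField 2 m)ˣ => (x : GaloisField 2 m)), Units.val_injective⟩ := by
      ext x
      simp only [mem_filter, mem_univ, true_and, mem_map, Function.Embedding.coeFn_mk]
      constructor
      · intro hx; exact ⟨(Ne.isUnit hx).unit, rfl⟩
      · rintro ⟨u, rfl⟩; exact u.ne_zero
    rw [hset, Finset.sum_map]
    simp only [Function.Embedding.coeFn_mk]
    have step : ∀ u : (GaloisField 2 m)ˣ, a / (u : GaloisField 2 m) + b * u + c * (u : GaloisField 2 m)^3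
        = a * ((u⁻¹ : (GaloisField 2 m)ˣ) : GaloisField 2 m) + b * ((u : GaloisField 2 m)^1) + c * (u : GaloisField 2 m)^3 := by
      intro u; simp [div_eq_mul_inv]
    simp_rw [step]
    rw [Finset.sum_add_distrib, Finset.sum_add_distrib, ← Finset.mul_sum,
      ← Finset.mul_sum, ← Finset.mul_sum]
    have e1 : ∑ u : (GaloisField 2 m)ˣ, ((u⁻¹ : (GaloisField 2 m)ˣ) : GaloisField 2 m)
        = ∑ u : (GaloisField 2 m)ˣ, ((u : GaloisField 2 m)^1) := by
      simp only [pow_one]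
      exact Fintype.sum_equiv (Equiv.inv _) _ _ (fun u => rfl)
    rw [e1, FiniteField.sum_pow_units _ 1, FiniteField.sum_pow_units _ 3,
      if_neg h7, if_neg h3]
    ring
  rw [key, map_zero]
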